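/- Let k be a positive integer and let w be a permutation in which the letter i does not lie between i−1 and i+1 (so D_i^{(k)}(w) is defined). Then Des_k(w) = Des_k(D_i^{(k)}(w)) and |Inv_k(w)| = |Inv_k(D_i^{(k)}(w))|; in particular, Des_k and |Inv_k| are constant on k-equivalence classes. -/

import Mathlib

open scoped Classical

/-- `x` splits the pair `a`, `b` if `a ≤ x < b` or `b ≤ x < a`. -/
def Splits (x a b : ℕ) : Prop := (a ≤ x ∧ x < b) ∨ (b ≤ x ∧ x < a)

/-- `m ∈ Γ_j^{(k)}(w)`, where the word `w` is accessed with 1-based indices: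
`j - k ∈ Γ_j^{(k)}(w)` when `w j` splits the pair `w (j-k), w (j-k+1)`, and for
`i ∈ Γ_j^{(k)}(w)`, also `i - k ∈ Γ_j^{(k)}(w)` when exactly one of `w i`, `w (i+1)`
splits the pair `w (i-k), w (i-k+1)`. -/
def MemGamma (k : ℕ) (w : ℕ → ℕ) (j m : ℕ) : Prop :=
  1 ≤ m ∧ ∃ t : ℕ, m + (t + 1) * k = j ∧
    Splits (w j) (w (j - k)) (w (j - k + 1)) ∧
    ∀ s, 1 ≤ s → s ≤ t →
      Xor' (Splits (w (m + s * k)) (w (m + (s - 1) * k)) (w (m + (s - 1) * k + 1)))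
           (Splits (w (m + s * k + 1)) (w (m + (s - 1) * k)) (w (m + (s - 1) * k + 1)))

/-- The map `γ_j^{(k)}`: interchange `w i` and `w (i+1)` for every `i ∈ Γ_j^{(k)}(w)`. -/
noncomputable def gamW (k j : ℕ) (w : ℕ → ℕ) : ℕ → ℕ := fun p =>
  if MemGamma k w j p then w (p + 1)
  else if MemGamma k w j (p - 1) then w (p - 1)
  else w p

noncomputable def phiAux (k : ℕ) (w : ℕ → ℕ) : ℕ → ℕ → ℕ
  | 0 => w
  | j + 1 => gamW k (j + 1) (phiAux k w j)

/-- `φ^{(k)} = γ_n^{(k)} ∘ γ_{n-1}^{(k)} ∘ ⋯ ∘ γ_1^{(k)}` on words of length `n`. -/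
noncomputable def phiW (k n : ℕ) (w : ℕ → ℕ) : ℕ → ℕ := phiAux k w n

/-- 1-based access to the letters of a list word. -/
def wf (l : List ℕ) (i : ℕ) : ℕ := l.getD (i - 1) 0

/-- `φ^{(k)}` as an operation on list words. -/
noncomputable def phiL (k : ℕ) (l : List ℕ) : List ℕ :=
  List.ofFn (fun i : Fin l.length => phiW k l.length (wf l) (i.1 + 1))

/-- The `k`-descent set `Des_k(w) = {(i, i+k) : w i > w (i+k)}` of a word of length `n`,
recorded by its set of first components. -/
def DesKF (k n : ℕ) (w : ℕ → ℕ) : Finset ℕ :=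
  (Finset.Icc 1 n).filter fun i => i + k ≤ n ∧ w (i + k) < w i

/-- The `k`-inversion set `Inv_k(w) = {(i, j) : 0 < j - i < k and w i > w j}`. -/
def InvKF (k n : ℕ) (w : ℕ → ℕ) : Finset (ℕ × ℕ) :=
  ((Finset.Icc 1 n) ×ˢ (Finset.Icc 1 n)).filter fun p =>
    p.1 < p.2 ∧ p.2 - p.1 < k ∧ w p.2 < w p.1

/-- The `k`-major index `maj_k(w) = |Inv_k(w)| + Σ_{(i,i+k) ∈ Des_k(w)} i`. -/
def majKF (k n : ℕ) (w : ℕ → ℕ) : ℕ := (InvKF k n w).card + ∑ i ∈ DesKF k n w, i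

/-- The `k`-major index of a list word. -/
def majKL (k : ℕ) (l : List ℕ) : ℕ := majKF k l.length (wf l)

/-- The ordinary major index of a list word: the sum of the indices `i` with
`w i > w (i+1)`. -/
def majL (l : List ℕ) : ℕ :=
  ∑ i ∈ (Finset.Icc 1 l.length).filter (fun i => i + 1 ≤ l.length ∧ wf l (i + 1) < wf l i), i

/-- The ordinary inversion number of a list word: the number of pairs `i < j` with
`w i > w j`. -/
def invL (l : List ℕ) : ℕ :=
  (((Finset.Icc 1 l.length) ×ˢ (Finset.Icc 1 l.length)).filter fun p =>
    p.1 < p.2 ∧ wf l p.2 < wf l p.1).card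

/-- The letter `i` does not lie between `i - 1` and `i + 1` in the word `l`. -/
def NotBetween (l : List ℕ) (i : ℕ) : Prop :=
  (l.idxOf i < l.idxOf (i - 1) ∧ l.idxOf i < l.idxOf (i + 1)) ∨
  (l.idxOf (i - 1) < l.idxOf i ∧ l.idxOf (i + 1) < l.idxOf i)

/-- Among `i - 1`, `i + 1`, the letter occurring at the extreme position on the
opposite side of `i` (assuming `i` does not lie between `i - 1` and `i + 1`). -/
def farL (l : List ℕ) (i : ℕ) : ℕ :=
  if l.idxOf i < l.idxOf (i - 1) then
    (if l.idxOf (i - 1) < l.idxOf (i + 1) then i + 1 else i - 1)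
  else
    (if l.idxOf (i - 1) < l.idxOf (i + 1) then i - 1 else i + 1)

/-- Among `i - 1`, `i + 1`, the letter occurring in the middle position. -/
def midL (l : List ℕ) (i : ℕ) : ℕ := if farL l i = i - 1 then i + 1 else i - 1

/-- The involution `d_i`, sending `⋯ i ⋯ i±1 ⋯ i∓1 ⋯` to `⋯ i∓1 ⋯ i±1 ⋯ i ⋯`:
it interchanges the letters `i` and `farL l i`, fixing all other letters. -/
def dMap (l : List ℕ) (i : ℕ) : List ℕ :=
  l.map (fun x => if x = i then farL l i else if x = farL l i then i else x)

/-- The involution `d̃_i`, sending `⋯ i ⋯ i±1 ⋯ i∓1 ⋯` to `⋯ i±1 ⋯ i∓1 ⋯ i ⋯`: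
it replaces the letter `i` by `midL l i`, `midL l i` by `farL l i`, and `farL l i`
by `i`, fixing all other letters. -/
def dtMap (l : List ℕ) (i : ℕ) : List ℕ :=
  l.map (fun x =>
    if x = i then midL l i
    else if x = midL l i then farL l i
    else if x = farL l i then i else x)

/-- `dist(i-1, i, i+1)`: the maximum distance between the positions of
`i - 1`, `i`, `i + 1` in `l`. -/
def distL (l : List ℕ) (i : ℕ) : ℕ :=
  max (max (l.idxOf (i - 1)) (l.idxOf i)) (l.idxOf (i + 1)) -
    min (min (l.idxOf (i - 1)) (l.idxOf i)) (l.idxOf (i + 1))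

/-- `D_i^{(k)} = d_i` if `dist(i-1, i, i+1) > k`, and `D_i^{(k)} = d̃_i` if
`dist(i-1, i, i+1) ≤ k`. -/
def DMap (k : ℕ) (l : List ℕ) (i : ℕ) : List ℕ :=
  if k < distL l i then dMap l i else dtMap l i

/-- `k`-equivalence: `w ∼_k u` if `w = D_{i₁}^{(k)} ⋯ D_{iₘ}^{(k)} (u)` for some
sequence `i₁, …, iₘ ≥ 2` of valid moves. -/
def EquivK (k : ℕ) : List ℕ → List ℕ → Prop :=
  Relation.ReflTransGen fun a b =>
    ∃ i, 2 ≤ i ∧ i + 1 ≤ a.length ∧ NotBetween a i ∧ b = DMap k a i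


private def sp (X Y p : ℕ × ℕ) : ℕ × ℕ := if p = X then Y else if p = Y then X else p

private lemma sp_left (X Y : ℕ × ℕ) : sp X Y X = Y := by
  unfold sp; rw [if_pos rfl]

private lemma sp_right (X Y : ℕ × ℕ) (h : X ≠ Y) : sp X Y Y = X := by
  unfold sp; rw [if_neg (Ne.symm h), if_pos rfl]

private lemma sp_other (X Y p : ℕ × ℕ) (h1 : p ≠ X) (h2 : p ≠ Y) : sp X Y p = p := by
  unfold sp; rw [if_neg h1, if_neg h2]

private lemma sp_invol (X Y : ℕ × ℕ) (h : X ≠ Y) (p : ℕ × ℕ) : sp X Y (sp X Y p) = p := by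
  by_cases h1 : p = X
  · subst h1; rw [sp_left, sp_right _ _ h]
  · by_cases h2 : p = Y
    · subst h2; rw [sp_right _ _ h, sp_left]
    · rw [sp_other _ _ _ h1 h2, sp_other _ _ _ h1 h2]

private lemma lemA (k n : ℕ) (hk : 1 ≤ k) (w w' : ℕ → ℕ)
    (h : ∀ a b : ℕ, 1 ≤ a → b ≤ n → a < b → b - a ≤ k → (w' b < w' a ↔ w b < w a)) :
    DesKF k n w = DesKF k n w' ∧ InvKF k n w = InvKF k n w' := by
  constructor
  · unfold DesKF
    apply Finset.filter_congr
    intro p hp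
    simp only [Finset.mem_Icc] at hp
    constructor
    · rintro ⟨h1, h2⟩
      exact ⟨h1, (h p (p + k) hp.1 h1 (by omega) (by omega)).mpr h2⟩
    · rintro ⟨h1, h2⟩
      exact ⟨h1, (h p (p + k) hp.1 h1 (by omega) (by omega)).mp h2⟩
  · unfold InvKF
    apply Finset.filter_congr
    intro p hp
    simp only [Finset.mem_product, Finset.mem_Icc] at hp
    constructor
    · rintro ⟨h1, h2, h3⟩
      exact ⟨h1, h2, (h p.1 p.2 hp.1.1 hp.2.2 h1 (by omega)).mpr h3⟩
    · rintro ⟨h1, h2, h3⟩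
      exact ⟨h1, h2, (h p.1 p.2 hp.1.1 hp.2.2 h1 (by omega)).mp h3⟩

private lemma lemB (k n q1 q2 q3 : ℕ) (w w' : ℕ → ℕ)
    (hq1 : 1 ≤ q1) (h12 : q1 < q2) (h23 : q2 < q3) (hq3 : q3 ≤ n) (hdk : q3 - q1 ≤ k)
    (h1 : ∀ a b : ℕ, 1 ≤ a → b ≤ n → a < b → b - a ≤ k →
      ¬(a = q1 ∧ b = q2) → ¬(a = q2 ∧ b = q3) → (w' b < w' a ↔ w b < w a))
    (hX : w q2 < w q1 ↔ w' q3 < w' q2)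
    (hY : w q3 < w q2 ↔ w' q2 < w' q1) :
    DesKF k n w = DesKF k n w' ∧ (InvKF k n w).card = (InvKF k n w').card := by
  constructor
  · unfold DesKF
    apply Finset.filter_congr
    intro p hp
    simp only [Finset.mem_Icc] at hp
    constructor
    · rintro ⟨ha, hb⟩
      exact ⟨ha, (h1 p (p + k) hp.1 ha (by omega) (by omega) (by omega) (by omega)).mpr hb⟩
    · rintro ⟨ha, hb⟩
      exact ⟨ha, (h1 p (p + k) hp.1 ha (by omega) (by omega) (by omega) (by omega)).mp hb⟩
  · have hq12 : ((q1, q2) : ℕ × ℕ) ≠ (q2, q3) := by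
      intro hc
      have := congrArg Prod.fst hc
      simp only at this
      omega
    have hmemA : ∀ p : ℕ × ℕ, p ∈ InvKF k n w ↔
        (1 ≤ p.1 ∧ p.1 ≤ n) ∧ (1 ≤ p.2 ∧ p.2 ≤ n) ∧ p.1 < p.2 ∧ p.2 - p.1 < k ∧ w p.2 < w p.1 := by
      intro p
      unfold InvKF
      simp [Finset.mem_filter, Finset.mem_product, Finset.mem_Icc, and_assoc]
    have hmemB : ∀ p : ℕ × ℕ, p ∈ InvKF k n w' ↔
        (1 ≤ p.1 ∧ p.1 ≤ n) ∧ (1 ≤ p.2 ∧ p.2 ≤ n) ∧ p.1 < p.2 ∧ p.2 - p.1 < k ∧ w' p.2 < w' p.1 := by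
      intro p
      unfold InvKF
      simp [Finset.mem_filter, Finset.mem_product, Finset.mem_Icc, and_assoc]
    have hi : ∀ p ∈ InvKF k n w, sp (q1, q2) (q2, q3) p ∈ InvKF k n w' := by
      intro p hp
      rw [hmemA] at hp
      rw [hmemB]
      by_cases ha : p = (q1, q2)
      · subst ha
        rw [sp_left]
        dsimp only at hp ⊢
        exact ⟨⟨by omega, by omega⟩, ⟨by omega, by omega⟩, by omega, by omega,
          hX.mp hp.2.2.2.2⟩
      · by_cases hb : p = (q2, q3)
        · subst hb
          rw [sp_right _ _ hq12]
          dsimp only at hp ⊢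
          exact ⟨⟨by omega, by omega⟩, ⟨by omega, by omega⟩, by omega, by omega,
            hY.mp hp.2.2.2.2⟩
        · rw [sp_other _ _ _ ha hb]
          refine ⟨hp.1, hp.2.1, hp.2.2.1, hp.2.2.2.1, ?_⟩
          refine (h1 p.1 p.2 hp.1.1 hp.2.1.2 hp.2.2.1 (by omega) ?_ ?_).mpr hp.2.2.2.2
          · intro hc; exact ha (Prod.ext hc.1 hc.2)
          · intro hc; exact hb (Prod.ext hc.1 hc.2)
    have hj : ∀ p ∈ InvKF k n w', sp (q1, q2) (q2, q3) p ∈ InvKF k n w := by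
      intro p hp
      rw [hmemB] at hp
      rw [hmemA]
      by_cases ha : p = (q1, q2)
      · subst ha
        rw [sp_left]
        dsimp only at hp ⊢
        exact ⟨⟨by omega, by omega⟩, ⟨by omega, by omega⟩, by omega, by omega,
          hY.mpr hp.2.2.2.2⟩
      · by_cases hb : p = (q2, q3)
        · subst hb
          rw [sp_right _ _ hq12]
          dsimp only at hp ⊢
          exact ⟨⟨by omega, by omega⟩, ⟨by omega, by omega⟩, by omega, by omega,
            hX.mpr hp.2.2.2.2⟩
        · rw [sp_other _ _ _ ha hb]
          refine ⟨hp.1, hp.2.1, hp.2.2.1, hp.2.2.2.1, ?_⟩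
          refine (h1 p.1 p.2 hp.1.1 hp.2.1.2 hp.2.2.1 (by omega) ?_ ?_).mp hp.2.2.2.2
          · intro hc; exact ha (Prod.ext hc.1 hc.2)
          · intro hc; exact hb (Prod.ext hc.1 hc.2)
    exact Finset.card_bij' (fun p _ => sp (q1, q2) (q2, q3) p)
      (fun p _ => sp (q1, q2) (q2, q3) p) hi hj
      (fun a _ => sp_invol _ _ hq12 a) (fun a _ => sp_invol _ _ hq12 a)

private lemma wf_map (l : List ℕ) (F : ℕ → ℕ) (p : ℕ) (h1 : 1 ≤ p) (h2 : p ≤ l.length) :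
    wf (l.map F) p = F (wf l p) := by
  unfold wf
  have h3 : p - 1 < l.length := by omega
  have h4 : p - 1 < (l.map F).length := by simp; omega
  rw [List.getD_eq_getElem _ _ h4, List.getElem_map, List.getD_eq_getElem _ _ h3]

private lemma permMap (n : ℕ) (L : List ℕ) (hL : L.Perm (List.range' 1 n)) (F : ℕ → ℕ)
    (hinj : Function.Injective F)
    (hrange : ∀ y, 1 ≤ y → y ≤ n → 1 ≤ F y ∧ F y ≤ n)
    (hsurj : ∀ x, 1 ≤ x → x ≤ n → ∃ y, 1 ≤ y ∧ y ≤ n ∧ F y = x) :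
    (L.map F).Perm (List.range' 1 n) := by
  refine (hL.map F).trans ?_
  apply List.perm_of_nodup_nodup_toFinset_eq
  · exact (List.nodup_range' (s := 1) (n := n)).map hinj
  · exact List.nodup_range' (s := 1) (n := n)
  · ext x
    simp only [List.mem_toFinset, List.mem_map, List.mem_range'_1]
    constructor
    · rintro ⟨y, hy, rfl⟩
      have := hrange y (by omega) (by omega)
      omega
    · intro hx
      obtain ⟨y, h1, h2, h3⟩ := hsurj x (by omega) (by omega)
      exact ⟨y, by omega, h3⟩

private lemma hfmLemma (l : List ℕ) (i : ℕ) (hi : 2 ≤ i) :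
    (farL l i = i + 1 ∧ midL l i = i - 1) ∨ (farL l i = i - 1 ∧ midL l i = i + 1) := by
  unfold midL farL
  split_ifs <;> omega

private lemma basics (n : ℕ) (l : List ℕ) (hl : l.Perm (List.range' 1 n)) :
    (∀ p, 1 ≤ p → p ≤ n → 1 ≤ wf l p ∧ wf l p ≤ n) ∧
    (∀ p q, 1 ≤ p → p ≤ n → 1 ≤ q → q ≤ n → wf l p = wf l q → p = q) := by
  have hlen : l.length = n := by simpa using hl.length_eq
  have hmem : ∀ x : ℕ, x ∈ l ↔ 1 ≤ x ∧ x ≤ n := by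
    intro x
    rw [hl.mem_iff, List.mem_range'_1]
    omega
  have hnd : l.Nodup := hl.symm.nodup (List.nodup_range' (s := 1) (n := n))
  constructor
  · intro p h1 h2
    have h3 : p - 1 < l.length := by omega
    have : wf l p ∈ l := by
      unfold wf; rw [List.getD_eq_getElem _ _ h3]; exact List.getElem_mem h3
    exact (hmem _).mp this
  · intro p q h1 h2 h3 h4 h5
    have hp : p - 1 < l.length := by omega
    have hq : q - 1 < l.length := by omega
    unfold wf at h5
    rw [List.getD_eq_getElem _ _ hp, List.getD_eq_getElem _ _ hq] at h5
    have := (hnd.getElem_inj_iff).mp h5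
    omega

private lemma posLemma (n : ℕ) (l : List ℕ) (hl : l.Perm (List.range' 1 n)) (i : ℕ)
    (hi : 2 ≤ i) (hi2 : i + 1 ≤ n) (hnb : NotBetween l i) :
    ∃ q1 q2 q3 : ℕ, q1 < q2 ∧ q2 < q3 ∧ 1 ≤ q1 ∧ q3 ≤ n ∧ distL l i = q3 - q1 ∧
      (∀ p, 1 ≤ p → p ≤ n → (wf l p = i - 1 ∨ wf l p = i ∨ wf l p = i + 1) →
        (p = q1 ∨ p = q2 ∨ p = q3)) ∧
      wf l q2 = midL l i ∧
      ((wf l q1 = i ∧ wf l q3 = farL l i) ∨ (wf l q1 = farL l i ∧ wf l q3 = i)) := by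
  have hlen : l.length = n := by simpa using hl.length_eq
  have hmem : ∀ x : ℕ, x ∈ l ↔ 1 ≤ x ∧ x ≤ n := by
    intro x
    rw [hl.mem_iff, List.mem_range'_1]
    omega
  obtain ⟨hbound, hinjw⟩ := basics n l hl
  have hm0 : (i - 1) ∈ l := (hmem _).mpr ⟨by omega, by omega⟩
  have hmi : i ∈ l := (hmem _).mpr ⟨by omega, by omega⟩
  have hm1 : (i + 1) ∈ l := (hmem _).mpr ⟨by omega, by omega⟩
  have hI0 : l.idxOf (i - 1) < n := by rw [← hlen]; exact List.idxOf_lt_length_iff.mpr hm0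
  have hIi : l.idxOf i < n := by rw [← hlen]; exact List.idxOf_lt_length_iff.mpr hmi
  have hI1 : l.idxOf (i + 1) < n := by rw [← hlen]; exact List.idxOf_lt_length_iff.mpr hm1
  have hwidx : ∀ v : ℕ, v ∈ l → wf l (l.idxOf v + 1) = v := by
    intro v hv
    have h1 : l.idxOf v < l.length := List.idxOf_lt_length_iff.mpr hv
    unfold wf
    simp only [Nat.add_sub_cancel]
    rw [List.getD_eq_getElem _ _ h1]
    exact List.getElem_idxOf h1
  have hw0 := hwidx _ hm0
  have hwi := hwidx _ hmi
  have hw1 := hwidx _ hm1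
  have hWP : ∀ p v, 1 ≤ p → p ≤ n → v ∈ l → wf l p = v → p = l.idxOf v + 1 := by
    intro p v h1 h2 hv hw
    have h3 : l.idxOf v < l.length := List.idxOf_lt_length_iff.mpr hv
    exact hinjw p (l.idxOf v + 1) h1 h2 (by omega) (by omega) (by rw [hw, hwidx v hv])
  have hne0i : l.idxOf (i - 1) ≠ l.idxOf i := by
    intro h; rw [h, hwi] at hw0; omega
  have hne1i : l.idxOf (i + 1) ≠ l.idxOf i := by
    intro h; rw [h, hwi] at hw1; omega
  have hne01 : l.idxOf (i - 1) ≠ l.idxOf (i + 1) := by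
    intro h; rw [h, hw1] at hw0; omega
  rcases hnb with ⟨ha1, ha2⟩ | ⟨hb1, hb2⟩
  · rcases Nat.lt_or_ge (l.idxOf (i - 1)) (l.idxOf (i + 1)) with hc | hc
    · have hfar : farL l i = i + 1 := by unfold farL; rw [if_pos ha1, if_pos hc]
      have hmid : midL l i = i - 1 := by unfold midL; rw [hfar, if_neg (by omega)]
      refine ⟨l.idxOf i + 1, l.idxOf (i - 1) + 1, l.idxOf (i + 1) + 1,
        by omega, by omega, by omega, by omega,
        by unfold distL; omega,
        ?_, by rw [hmid]; exact hw0, Or.inl ⟨hwi, by rw [hfar]; exact hw1⟩⟩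
      intro p hp1 hp2 hv
      rcases hv with hv | hv | hv
      · exact Or.inr (Or.inl (hWP p _ hp1 hp2 hm0 hv))
      · exact Or.inl (hWP p _ hp1 hp2 hmi hv)
      · exact Or.inr (Or.inr (hWP p _ hp1 hp2 hm1 hv))
    · have hfar : farL l i = i - 1 := by unfold farL; rw [if_pos ha1, if_neg (by omega)]
      have hmid : midL l i = i + 1 := by unfold midL; rw [hfar, if_pos rfl]
      refine ⟨l.idxOf i + 1, l.idxOf (i + 1) + 1, l.idxOf (i - 1) + 1,
        by omega, by omega, by omega, by omega,
        by unfold distL; omega,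
        ?_, by rw [hmid]; exact hw1, Or.inl ⟨hwi, by rw [hfar]; exact hw0⟩⟩
      intro p hp1 hp2 hv
      rcases hv with hv | hv | hv
      · exact Or.inr (Or.inr (hWP p _ hp1 hp2 hm0 hv))
      · exact Or.inl (hWP p _ hp1 hp2 hmi hv)
      · exact Or.inr (Or.inl (hWP p _ hp1 hp2 hm1 hv))
  · rcases Nat.lt_or_ge (l.idxOf (i - 1)) (l.idxOf (i + 1)) with hc | hc
    · have hfar : farL l i = i - 1 := by unfold farL; rw [if_neg (by omega), if_pos hc]
      have hmid : midL l i = i + 1 := by unfold midL; rw [hfar, if_pos rfl]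
      refine ⟨l.idxOf (i - 1) + 1, l.idxOf (i + 1) + 1, l.idxOf i + 1,
        by omega, by omega, by omega, by omega,
        by unfold distL; omega,
        ?_, by rw [hmid]; exact hw1, Or.inr ⟨by rw [hfar]; exact hw0, hwi⟩⟩
      intro p hp1 hp2 hv
      rcases hv with hv | hv | hv
      · exact Or.inl (hWP p _ hp1 hp2 hm0 hv)
      · exact Or.inr (Or.inr (hWP p _ hp1 hp2 hmi hv))
      · exact Or.inr (Or.inl (hWP p _ hp1 hp2 hm1 hv))
    · have hfar : farL l i = i + 1 := by unfold farL; rw [if_neg (by omega), if_neg (by omega)]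
      have hmid : midL l i = i - 1 := by unfold midL; rw [hfar, if_neg (by omega)]
      refine ⟨l.idxOf (i + 1) + 1, l.idxOf (i - 1) + 1, l.idxOf i + 1,
        by omega, by omega, by omega, by omega,
        by unfold distL; omega,
        ?_, by rw [hmid]; exact hw0, Or.inr ⟨by rw [hfar]; exact hw1, hwi⟩⟩
      intro p hp1 hp2 hv
      rcases hv with hv | hv | hv
      · exact Or.inr (Or.inl (hWP p _ hp1 hp2 hm0 hv))
      · exact Or.inr (Or.inr (hWP p _ hp1 hp2 hmi hv))
      · exact Or.inl (hWP p _ hp1 hp2 hm1 hv)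

private lemma dcmp (k n i fa md q1 q2 q3 : ℕ) (w : ℕ → ℕ)
    (hfm : (fa = i + 1 ∧ md = i - 1) ∨ (fa = i - 1 ∧ md = i + 1)) (hi : 2 ≤ i)
    (h12 : q1 < q2) (h23 : q2 < q3)
    (hbound : ∀ p, 1 ≤ p → p ≤ n → 1 ≤ w p ∧ w p ≤ n)
    (hinj : ∀ p q, 1 ≤ p → p ≤ n → 1 ≤ q → q ≤ n → w p = w q → p = q)
    (hset : ∀ p, 1 ≤ p → p ≤ n → (w p = i - 1 ∨ w p = i ∨ w p = i + 1) →
      (p = q1 ∨ p = q2 ∨ p = q3))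
    (hwq2 : w q2 = md)
    (hvals : (w q1 = i ∧ w q3 = fa) ∨ (w q1 = fa ∧ w q3 = i))
    (hgt : k < q3 - q1) :
    ∀ a b : ℕ, 1 ≤ a → b ≤ n → a < b → b - a ≤ k →
      ((if w b = i then fa else if w b = fa then i else w b) <
       (if w a = i then fa else if w a = fa then i else w a) ↔ w b < w a) := by
  intro a b ha hb hab hbk
  have ha' : a ≤ n := by omega
  have hb' : 1 ≤ b := by omega
  have hxa := hbound a ha ha'
  have hxb := hbound b hb' hb
  have hxy : w a ≠ w b := fun h => by have := hinj a b ha ha' hb' hb h; omega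
  have hn1 : ¬(w a = i ∧ w b = fa) := by
    rintro ⟨hva, hvb⟩
    have hqa := hset a ha ha' (by omega)
    have hqb := hset b hb' hb (by omega)
    rcases hvals with ⟨hv1, hv3⟩ | ⟨hv1, hv3⟩ <;>
      rcases hqa with rfl | rfl | rfl <;> rcases hqb with rfl | rfl | rfl <;> omega
  have hn2 : ¬(w a = fa ∧ w b = i) := by
    rintro ⟨hva, hvb⟩
    have hqa := hset a ha ha' (by omega)
    have hqb := hset b hb' hb (by omega)
    rcases hvals with ⟨hv1, hv3⟩ | ⟨hv1, hv3⟩ <;>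
      rcases hqa with rfl | rfl | rfl <;> rcases hqb with rfl | rfl | rfl <;> omega
  clear hset hinj hbound hvals hwq2
  split_ifs <;> omega

private lemma dtcmp (k n i fa md q1 q2 q3 : ℕ) (w : ℕ → ℕ)
    (hfm : (fa = i + 1 ∧ md = i - 1) ∨ (fa = i - 1 ∧ md = i + 1)) (hi : 2 ≤ i)
    (h12 : q1 < q2) (h23 : q2 < q3)
    (hbound : ∀ p, 1 ≤ p → p ≤ n → 1 ≤ w p ∧ w p ≤ n)
    (hinj : ∀ p q, 1 ≤ p → p ≤ n → 1 ≤ q → q ≤ n → w p = w q → p = q)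
    (hset : ∀ p, 1 ≤ p → p ≤ n → (w p = i - 1 ∨ w p = i ∨ w p = i + 1) →
      (p = q1 ∨ p = q2 ∨ p = q3))
    (hwq2 : w q2 = md)
    (hvals : (w q1 = i ∧ w q3 = fa) ∨ (w q1 = fa ∧ w q3 = i)) :
    ∀ a b : ℕ, 1 ≤ a → b ≤ n → a < b → b - a ≤ k →
      ¬(a = q1 ∧ b = q2) → ¬(a = q2 ∧ b = q3) →
      ((if w b = i then md else if w b = md then fa else if w b = fa then i else w b) <
       (if w a = i then md else if w a = md then fa else if w a = fa then i else w a) ↔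
       w b < w a) := by
  intro a b ha hb hab hbk hne1 hne2
  have ha' : a ≤ n := by omega
  have hb' : 1 ≤ b := by omega
  have hxa := hbound a ha ha'
  have hxb := hbound b hb' hb
  have hxy : w a ≠ w b := fun h => by have := hinj a b ha ha' hb' hb h; omega
  by_cases htrip : (w a = i - 1 ∨ w a = i ∨ w a = i + 1) ∧
      (w b = i - 1 ∨ w b = i ∨ w b = i + 1)
  · obtain ⟨hta, htb⟩ := htrip
    have hqa := hset a ha ha' hta
    have hqb := hset b hb' hb htb
    have hab' : a = q1 ∧ b = q3 := by
      rcases hqa with rfl | rfl | rfl <;> rcases hqb with rfl | rfl | rfl <;>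
        first
        | exact ⟨rfl, rfl⟩
        | omega
        | exact absurd ⟨rfl, rfl⟩ hne1
        | exact absurd ⟨rfl, rfl⟩ hne2
    obtain ⟨rfl, rfl⟩ := hab'
    rcases hvals with ⟨hv1, hv3⟩ | ⟨hv1, hv3⟩ <;> rw [hv1, hv3] <;>
      split_ifs <;> omega
  · have houts : (w a < i - 1 ∨ i + 1 < w a) ∨ (w b < i - 1 ∨ i + 1 < w b) := by
      rcases not_and_or.mp htrip with h | h
      · left; omega
      · right; omega
    clear hset hinj hbound htrip hne1 hne2
    split_ifs <;> omega

private lemma dtXY (i fa md q1 q2 q3 : ℕ) (w : ℕ → ℕ)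
    (hfm : (fa = i + 1 ∧ md = i - 1) ∨ (fa = i - 1 ∧ md = i + 1)) (hi : 2 ≤ i)
    (hwq2 : w q2 = md)
    (hvals : (w q1 = i ∧ w q3 = fa) ∨ (w q1 = fa ∧ w q3 = i)) :
    (w q2 < w q1 ↔
      (if w q3 = i then md else if w q3 = md then fa else if w q3 = fa then i else w q3) <
      (if w q2 = i then md else if w q2 = md then fa else if w q2 = fa then i else w q2)) ∧
    (w q3 < w q2 ↔
      (if w q2 = i then md else if w q2 = md then fa else if w q2 = fa then i else w q2) <
      (if w q1 = i then md else if w q1 = md then fa else if w q1 = fa then i else w q1)) := by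
  rcases hvals with ⟨hv1, hv3⟩ | ⟨hv1, hv3⟩ <;> rw [hwq2, hv1, hv3] <;>
    refine ⟨?_, ?_⟩ <;> split_ifs <;> omega

private lemma permD (n : ℕ) (l : List ℕ) (hl : l.Perm (List.range' 1 n)) (i : ℕ)
    (hi : 2 ≤ i) (hi2 : i + 1 ≤ n) :
    (dMap l i).Perm (List.range' 1 n) := by
  have hfm := hfmLemma l i hi
  unfold dMap
  apply permMap n l hl
  · intro a b hab
    dsimp only at hab
    split_ifs at hab <;> omega
  · intro y hy1 hy2
    split_ifs <;> omega
  · intro x hx1 hx2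
    by_cases hc1 : x = i
    · refine ⟨farL l i, by omega, by omega, ?_⟩
      show (if farL l i = i then farL l i else if farL l i = farL l i then i else farL l i) = x
      rw [if_neg (by omega), if_pos rfl, hc1]
    · by_cases hc2 : x = farL l i
      · refine ⟨i, by omega, by omega, ?_⟩
        show (if i = i then farL l i else if i = farL l i then i else i) = x
        rw [if_pos rfl, hc2]
      · refine ⟨x, hx1, hx2, ?_⟩
        show (if x = i then farL l i else if x = farL l i then i else x) = x
        rw [if_neg hc1, if_neg hc2]

private lemma permDt (n : ℕ) (l : List ℕ) (hl : l.Perm (List.range' 1 n)) (i : ℕ)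
    (hi : 2 ≤ i) (hi2 : i + 1 ≤ n) :
    (dtMap l i).Perm (List.range' 1 n) := by
  have hfm := hfmLemma l i hi
  unfold dtMap
  apply permMap n l hl
  · intro a b hab
    dsimp only at hab
    split_ifs at hab <;> omega
  · intro y hy1 hy2
    split_ifs <;> omega
  · intro x hx1 hx2
    by_cases hc1 : x = midL l i
    · refine ⟨i, by omega, by omega, ?_⟩
      show (if i = i then midL l i else if i = midL l i then farL l i
        else if i = farL l i then i else i) = x
      rw [if_pos rfl, hc1]
    · by_cases hc2 : x = farL l i
      · refine ⟨midL l i, by omega, by omega, ?_⟩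
        show (if midL l i = i then midL l i else if midL l i = midL l i then farL l i
          else if midL l i = farL l i then i else midL l i) = x
        rw [if_neg (by omega), if_pos rfl, hc2]
      · by_cases hc3 : x = i
        · refine ⟨farL l i, by omega, by omega, ?_⟩
          show (if farL l i = i then midL l i else if farL l i = midL l i then farL l i
            else if farL l i = farL l i then i else farL l i) = x
          rw [if_neg (by omega), if_neg (by omega), if_pos rfl, hc3]
        · refine ⟨x, hx1, hx2, ?_⟩
          show (if x = i then midL l i else if x = midL l i then farL l i
            else if x = farL l i then i else x) = x
          rw [if_neg hc3, if_neg hc1, if_neg hc2]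

private lemma stepLemma (k : ℕ) (hk : 1 ≤ k) (n : ℕ) (l : List ℕ)
    (hl : l.Perm (List.range' 1 n)) (i : ℕ) (hi : 2 ≤ i) (hi2 : i + 1 ≤ n)
    (hnb : NotBetween l i) :
    (DesKF k n (wf l) = DesKF k n (wf (DMap k l i)) ∧
      (InvKF k n (wf l)).card = (InvKF k n (wf (DMap k l i))).card) ∧
    (DMap k l i).Perm (List.range' 1 n) := by
  have hlen : l.length = n := by simpa using hl.length_eq
  obtain ⟨hbound, hinjw⟩ := basics n l hl
  have hfm := hfmLemma l i hi
  obtain ⟨q1, q2, q3, h12, h23, hq1, hq3, hdistq, hset, hwq2, hvals⟩ :=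
    posLemma n l hl i hi hi2 hnb
  by_cases hdcase : k < distL l i
  · have hDm : DMap k l i = dMap l i := by unfold DMap; rw [if_pos hdcase]
    have hw' : ∀ p, 1 ≤ p → p ≤ n →
        wf (DMap k l i) p =
          (if wf l p = i then farL l i else if wf l p = farL l i then i else wf l p) := by
      intro p h1 h2
      rw [hDm]
      exact wf_map l _ p h1 (by omega)
    have hcmp : ∀ a b : ℕ, 1 ≤ a → b ≤ n → a < b → b - a ≤ k →
        (wf (DMap k l i) b < wf (DMap k l i) a ↔ wf l b < wf l a) := by
      intro a b ha hb hab hbk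
      rw [hw' a ha (by omega), hw' b (by omega) hb]
      exact dcmp k n i (farL l i) (midL l i) q1 q2 q3 (wf l) hfm hi h12 h23
        hbound hinjw hset hwq2 hvals (by omega) a b ha hb hab hbk
    obtain ⟨hdes, hinveq⟩ := lemA k n hk (wf l) (wf (DMap k l i)) hcmp
    refine ⟨⟨hdes, by rw [hinveq]⟩, ?_⟩
    rw [hDm]
    exact permD n l hl i hi hi2
  · have hDm : DMap k l i = dtMap l i := by unfold DMap; rw [if_neg hdcase]
    have hw' : ∀ p, 1 ≤ p → p ≤ n →
        wf (DMap k l i) p =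
          (if wf l p = i then midL l i
           else if wf l p = midL l i then farL l i
           else if wf l p = farL l i then i else wf l p) := by
      intro p h1 h2
      rw [hDm]
      exact wf_map l _ p h1 (by omega)
    have h1cmp : ∀ a b : ℕ, 1 ≤ a → b ≤ n → a < b → b - a ≤ k →
        ¬(a = q1 ∧ b = q2) → ¬(a = q2 ∧ b = q3) →
        (wf (DMap k l i) b < wf (DMap k l i) a ↔ wf l b < wf l a) := by
      intro a b ha hb hab hbk hne1 hne2
      rw [hw' a ha (by omega), hw' b (by omega) hb]
      exact dtcmp k n i (farL l i) (midL l i) q1 q2 q3 (wf l) hfm hi h12 h23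
        hbound hinjw hset hwq2 hvals a b ha hb hab hbk hne1 hne2
    have hXY := dtXY i (farL l i) (midL l i) q1 q2 q3 (wf l) hfm hi hwq2 hvals
    have hXlem : wf l q2 < wf l q1 ↔ wf (DMap k l i) q3 < wf (DMap k l i) q2 := by
      rw [hw' q3 (by omega) hq3, hw' q2 (by omega) (by omega)]
      exact hXY.1
    have hYlem : wf l q3 < wf l q2 ↔ wf (DMap k l i) q2 < wf (DMap k l i) q1 := by
      rw [hw' q2 (by omega) (by omega), hw' q1 hq1 (by omega)]
      exact hXY.2
    obtain ⟨hdes, hinveq⟩ := lemB k n q1 q2 q3 (wf l) (wf (DMap k l i)) hq1 h12 h23 hq3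
      (by omega) h1cmp hXlem hYlem
    refine ⟨⟨hdes, hinveq⟩, ?_⟩
    rw [hDm]
    exact permDt n l hl i hi hi2

/-- For a positive integer `k` and a permutation `w` of `1, …, n`
in which the letter `i` does not lie between `i - 1` and `i + 1`,
`Des_k(w) = Des_k(D_i^{(k)}(w))` and `|Inv_k(w)| = |Inv_k(D_i^{(k)}(w))|`; in
particular, `Des_k` and `|Inv_k|` are constant on `k`-equivalence classes. -/
theorem Dk_preserves_desk_invk (k : ℕ) (hk : 1 ≤ k) (n : ℕ) (l : List ℕ)
    (hl : l.Perm (List.range' 1 n)) (i : ℕ) (hi : 2 ≤ i) (hi2 : i + 1 ≤ n)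
    (hnb : NotBetween l i) :
    (DesKF k n (wf l) = DesKF k n (wf (DMap k l i)) ∧
      (InvKF k n (wf l)).card = (InvKF k n (wf (DMap k l i))).card) ∧
    ∀ u : List ℕ, EquivK k l u →
      DesKF k n (wf l) = DesKF k n (wf u) ∧
        (InvKF k n (wf l)).card = (InvKF k n (wf u)).card := by
  refine ⟨(stepLemma k hk n l hl i hi hi2 hnb).1, ?_⟩
  intro u hu
  unfold EquivK at hu
  have key : u.Perm (List.range' 1 n) ∧ DesKF k n (wf l) = DesKF k n (wf u) ∧
      (InvKF k n (wf l)).card = (InvKF k n (wf u)).card := by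
    induction hu with
    | refl => exact ⟨hl, rfl, rfl⟩
    | @tail b c hab hbc ih =>
      obtain ⟨hpb, hdes, hinv⟩ := ih
      obtain ⟨j, hj2, hjlen, hjnb, rfl⟩ := hbc
      have hblen : b.length = n := by simpa using hpb.length_eq
      have hstep := stepLemma k hk n b hpb j hj2 (by omega) hjnb
      exact ⟨hstep.2, hdes.trans hstep.1.1, hinv.trans hstep.1.2⟩
  exact ⟨key.2.1, key.2.2⟩
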